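/- Let n1, n2 ≥ 2 be integers and consider the DFA M̂ defined as follows: the alphabet is Σ = (Fin n1 → Fin n1) × (Fin n2 → Fin n2); the states are the subsets of Fin n1 × Fin n2; the initial state is ∅; a state T is final iff T = ∅ or (n1−1, n2−1) ∈ T; the transition on a state E by a letter (f,g) is cl(E′), where E′ = {(f(0), g(0))} if E = ∅ and E′ = {(f(i), g(j)) | (i,j) ∈ E} otherwise, and cl(S) = S ∪ {(0,0)} if (n1−1, n2−1) ∈ S and cl(S) = S otherwise. Then every subset T of Fin n1 × Fin n2 satisfying ((n1−1, n2−1) ∈ T implies (0,0) ∈ T) is reachable in M̂, i.e., there is a word w over Σ such that reading w from the initial state ∅ leads to the state T. -/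
import Mathlib


attribute [local instance] Classical.propDecidable

/-- The transition function of the DFA `M̂`: on a state `E ⊆ Fin n1 × Fin n2` and a
letter `(f, g)`, first form `E' = {(f 0, g 0)}` if `E = ∅` and
`E' = {(f i, g j) | (i,j) ∈ E}` otherwise, then add `(0,0)` to `E'` whenever
`(n1-1, n2-1) ∈ E'`. -/
noncomputable def starInterStep (n1 n2 : ℕ) (h1 : 0 < n1) (h2 : 0 < n2)
    (E : Set (Fin n1 × Fin n2)) (a : (Fin n1 → Fin n1) × (Fin n2 → Fin n2)) :
    Set (Fin n1 × Fin n2) :=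
  let E' : Set (Fin n1 × Fin n2) :=
    if E = ∅ then {(a.1 ⟨0, h1⟩, a.2 ⟨0, h2⟩)}
    else (fun p : Fin n1 × Fin n2 => (a.1 p.1, a.2 p.2)) '' E
  if ((⟨n1 - 1, Nat.sub_lt h1 Nat.one_pos⟩ : Fin n1),
      (⟨n2 - 1, Nat.sub_lt h2 Nat.one_pos⟩ : Fin n2)) ∈ E' then
    insert ((⟨0, h1⟩ : Fin n1), (⟨0, h2⟩ : Fin n2)) E'
  else E'

namespace StarInterAux

variable {n1 n2 : ℕ}

def zz (p1 : 0 < n1) (p2 : 0 < n2) : Fin n1 × Fin n2 := (⟨0, p1⟩, ⟨0, p2⟩)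

def mm (p1 : 0 < n1) (p2 : 0 < n2) : Fin n1 × Fin n2 :=
  (⟨n1 - 1, Nat.sub_lt p1 Nat.one_pos⟩, ⟨n2 - 1, Nat.sub_lt p2 Nat.one_pos⟩)

def Reach (p1 : 0 < n1) (p2 : 0 < n2) (T : Set (Fin n1 × Fin n2)) : Prop :=
  ∃ w : List ((Fin n1 → Fin n1) × (Fin n2 → Fin n2)),
    w.foldl (starInterStep n1 n2 p1 p2) ∅ = T

lemma zz_ne_mm (hn1 : 2 ≤ n1) (p1 : 0 < n1) (p2 : 0 < n2) : zz p1 p2 ≠ mm p1 p2 := by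
  intro h
  have := congrArg (fun p => (p.1 : Fin n1).val) h
  simp [zz, mm] at this
  omega

lemma step_ne_pos (p1 : 0 < n1) (p2 : 0 < n2) {E : Set (Fin n1 × Fin n2)} (hE : E ≠ ∅)
    (f : Fin n1 → Fin n1) (g : Fin n2 → Fin n2)
    (hm : mm p1 p2 ∈ ((fun p : Fin n1 × Fin n2 => (f p.1, g p.2)) '' E)) :
    starInterStep n1 n2 p1 p2 E (f, g) =
      insert (zz p1 p2) ((fun p : Fin n1 × Fin n2 => (f p.1, g p.2)) '' E) := by
  simp only [starInterStep, if_neg hE]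
  exact if_pos hm

lemma step_ne_neg (p1 : 0 < n1) (p2 : 0 < n2) {E : Set (Fin n1 × Fin n2)} (hE : E ≠ ∅)
    (f : Fin n1 → Fin n1) (g : Fin n2 → Fin n2)
    (hm : mm p1 p2 ∉ ((fun p : Fin n1 × Fin n2 => (f p.1, g p.2)) '' E)) :
    starInterStep n1 n2 p1 p2 E (f, g) =
      (fun p : Fin n1 × Fin n2 => (f p.1, g p.2)) '' E := by
  simp only [starInterStep, if_neg hE]
  exact if_neg hm

lemma step_empty_neg (p1 : 0 < n1) (p2 : 0 < n2)
    (f : Fin n1 → Fin n1) (g : Fin n2 → Fin n2)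
    (hm : mm p1 p2 ∉ ({(f ⟨0, p1⟩, g ⟨0, p2⟩)} : Set (Fin n1 × Fin n2))) :
    starInterStep n1 n2 p1 p2 ∅ (f, g) = ({(f ⟨0, p1⟩, g ⟨0, p2⟩)} : Set (Fin n1 × Fin n2)) := by
  simp only [starInterStep, if_pos rfl]
  exact if_neg hm

lemma reach_step (p1 : 0 < n1) (p2 : 0 < n2) {S : Set (Fin n1 × Fin n2)}
    (hS : Reach p1 p2 S) (a : (Fin n1 → Fin n1) × (Fin n2 → Fin n2)) :
    Reach p1 p2 (starInterStep n1 n2 p1 p2 S a) := by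
  obtain ⟨w, hw⟩ := hS
  exact ⟨w ++ [a], by simp [List.foldl_append, hw]⟩

lemma exists_perm {n : ℕ} {a b u v : Fin n} (hab : a ≠ b) (huv : u ≠ v) :
    ∃ π : Equiv.Perm (Fin n), π a = u ∧ π b = v := by
  set e1 := Equiv.swap a u with he1
  have h1 : e1 a = u := Equiv.swap_apply_left a u
  have hb' : e1 b ≠ u := fun h => hab (e1.injective (by rw [h1, h]))
  refine ⟨e1.trans (Equiv.swap (e1 b) v), ?_, ?_⟩
  · simp only [Equiv.trans_apply, h1]
    exact Equiv.swap_apply_of_ne_of_ne (Ne.symm hb') huv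
  · simp only [Equiv.trans_apply]
    exact Equiv.swap_apply_left _ _

/-- the double-swap involution -/
def ds (p1 : 0 < n1) (p2 : 0 < n2) : Fin n1 × Fin n2 → Fin n1 × Fin n2 :=
  fun p => (Equiv.swap (⟨0, p1⟩ : Fin n1) ⟨n1 - 1, Nat.sub_lt p1 Nat.one_pos⟩ p.1,
            Equiv.swap (⟨0, p2⟩ : Fin n2) ⟨n2 - 1, Nat.sub_lt p2 Nat.one_pos⟩ p.2)

lemma ds_ds (p1 : 0 < n1) (p2 : 0 < n2) (p : Fin n1 × Fin n2) :
    ds p1 p2 (ds p1 p2 p) = p := by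
  simp [ds]

lemma ds_inj (p1 : 0 < n1) (p2 : 0 < n2) : Function.Injective (ds p1 p2) :=
  Function.involutive_iff_iter_2_eq_id.mpr (by funext p; exact ds_ds p1 p2 p) |> fun h => h.injective

lemma ds_zz (p1 : 0 < n1) (p2 : 0 < n2) : ds p1 p2 (zz p1 p2) = mm p1 p2 := by
  simp [ds, zz, mm]

lemma mem_ds_image (p1 : 0 < n1) (p2 : 0 < n2) {X : Set (Fin n1 × Fin n2)} :
    mm p1 p2 ∈ ds p1 p2 '' X ↔ zz p1 p2 ∈ X := by
  constructor
  · rintro ⟨q, hq, hq2⟩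
    have : q = zz p1 p2 := by
      have := congrArg (ds p1 p2) hq2
      rw [ds_ds] at this
      rw [this, ← ds_zz p1 p2, ds_ds]
    rwa [this] at hq
  · intro h
    exact ⟨zz p1 p2, h, ds_zz p1 p2⟩

lemma ds_image_image (p1 : 0 < n1) (p2 : 0 < n2) (X : Set (Fin n1 × Fin n2)) :
    ds p1 p2 '' (ds p1 p2 '' X) = X := by
  rw [Set.image_image]
  simp [ds_ds]

lemma reach_insert_zz (hn1 : 2 ≤ n1) (p1 : 0 < n1) (p2 : 0 < n2)
    {T : Set (Fin n1 × Fin n2)} (hz : zz p1 p2 ∈ T) (hm : mm p1 p2 ∈ T)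
    (hr : Reach p1 p2 (ds p1 p2 '' (T \ {zz p1 p2}))) : Reach p1 p2 T := by
  set f : Fin n1 → Fin n1 := ⇑(Equiv.swap (⟨0, p1⟩ : Fin n1) ⟨n1 - 1, Nat.sub_lt p1 Nat.one_pos⟩) with hf
  set g : Fin n2 → Fin n2 := ⇑(Equiv.swap (⟨0, p2⟩ : Fin n2) ⟨n2 - 1, Nat.sub_lt p2 Nat.one_pos⟩) with hg
  have himg : (fun p : Fin n1 × Fin n2 => (f p.1, g p.2)) = ds p1 p2 := rfl
  have hSne : ds p1 p2 '' (T \ {zz p1 p2}) ≠ ∅ := by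
    apply Set.nonempty_iff_ne_empty.mp
    exact ⟨ds p1 p2 (mm p1 p2), Set.mem_image_of_mem _ ⟨hm, fun h => zz_ne_mm hn1 p1 p2 (by rw [← h])⟩⟩
  have := reach_step p1 p2 hr (f, g)
  rw [step_ne_pos p1 p2 hSne f g (by rw [himg, ds_image_image]; exact ⟨hm, fun h => zz_ne_mm hn1 p1 p2 (by rw [← h])⟩)] at this
  rw [himg, ds_image_image, Set.insert_diff_singleton, Set.insert_eq_of_mem hz] at this
  exact this


lemma reach_of_image (p1 : 0 < n1) (p2 : 0 < n2) {S T : Set (Fin n1 × Fin n2)}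
    (hS : Reach p1 p2 S) (hSne : S ≠ ∅) (f : Fin n1 → Fin n1) (g : Fin n2 → Fin n2)
    (himg : (fun p : Fin n1 × Fin n2 => (f p.1, g p.2)) '' S = T)
    (hTm : mm p1 p2 ∉ T) : Reach p1 p2 T := by
  have := reach_step p1 p2 hS (f, g)
  rwa [step_ne_neg p1 p2 hSne f g (himg ▸ hTm), himg] at this

lemma fin_zero_ne_max {n : ℕ} (hn : 2 ≤ n) (p : 0 < n) :
    (⟨0, p⟩ : Fin n) ≠ ⟨n - 1, Nat.sub_lt p Nat.one_pos⟩ := by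
  simp only [ne_eq, Fin.mk.injEq]
  omega

theorem reach_all (hn1 : 2 ≤ n1) (hn2 : 2 ≤ n2) (p1 : 0 < n1) (p2 : 0 < n2) :
    ∀ k, ∀ T : Set (Fin n1 × Fin n2), T.ncard = k → (mm p1 p2 ∈ T → zz p1 p2 ∈ T) →
      Reach p1 p2 T := by
  intro k
  induction k using Nat.strong_induction_on with
  | _ k IH =>
  intro T hk hT
  by_cases hm : mm p1 p2 ∈ T
  · -- growth case : T contains mm (hence zz)
    have hz : zz p1 p2 ∈ T := hT hm
    have hkpos : 0 < k := by
      rw [← hk]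
      exact (Set.ncard_pos (Set.toFinite T)).mpr ⟨_, hz⟩
    apply reach_insert_zz hn1 p1 p2 hz hm
    apply IH (k - 1) (by omega)
    · rw [Set.ncard_image_of_injective _ (ds_inj p1 p2),
        Set.ncard_diff_singleton_of_mem hz, hk]
    · rw [mem_ds_image]
      intro h
      exact absurd rfl h.2
  · rcases Nat.lt_or_ge k 2 with hk2 | hk2
    · -- k = 0 or k = 1
      interval_cases k
      · have hTe : T = ∅ := by
          rw [← Set.ncard_eq_zero (Set.toFinite T)]; exact hk
        exact ⟨[], by rw [List.foldl_nil, hTe]⟩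
      · obtain ⟨p, rfl⟩ := Set.ncard_eq_one.mp hk
        have hpm : mm p1 p2 ≠ p := fun h => hm (by rw [h]; exact rfl)
        refine ⟨[(fun _ => p.1, fun _ => p.2)], ?_⟩
        rw [List.foldl_cons, List.foldl_nil,
          step_empty_neg p1 p2 _ _ (by simpa using hpm)]
    · -- k ≥ 2, mm ∉ T
      by_cases hgen : ∃ t1 ∈ T, ∃ t2 ∈ T, t1.1 ≠ t2.1 ∧ t1.2 ≠ t2.2
      · -- a generic pair exists: relocate T so that it contains zz and mm
        obtain ⟨t1, ht1, t2, ht2, hne1, hne2⟩ := hgen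
        obtain ⟨π1, hπ1a, hπ1b⟩ := exists_perm hne1 (fin_zero_ne_max hn1 p1)
        obtain ⟨π2, hπ2a, hπ2b⟩ := exists_perm hne2 (fin_zero_ne_max hn2 p2)
        set F : Fin n1 × Fin n2 → Fin n1 × Fin n2 := fun p => (π1 p.1, π2 p.2) with hF
        set S := F '' T with hSdef
        have hFinj : Function.Injective F := by
          intro x y h
          rw [Prod.ext_iff] at h ⊢
          exact ⟨π1.injective h.1, π2.injective h.2⟩
        have hzS : zz p1 p2 ∈ S := ⟨t1, ht1, by simp only [hF, hπ1a, hπ2a]; rfl⟩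
        have hmS : mm p1 p2 ∈ S := ⟨t2, ht2, by simp only [hF, hπ1b, hπ2b]; rfl⟩
        have hScard : S.ncard = k := by
          rw [hSdef, Set.ncard_image_of_injective _ hFinj, hk]
        have hSreach : Reach p1 p2 S := by
          apply reach_insert_zz hn1 p1 p2 hzS hmS
          apply IH (k - 1) (by omega)
          · rw [Set.ncard_image_of_injective _ (ds_inj p1 p2),
              Set.ncard_diff_singleton_of_mem hzS, hScard]
          · rw [mem_ds_image]
            intro h
            exact absurd rfl h.2
        have hSne : S ≠ ∅ := Set.nonempty_iff_ne_empty.mp ⟨_, hzS⟩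
        refine reach_of_image p1 p2 hSreach hSne (⇑π1.symm) (⇑π2.symm) ?_ hm
        rw [hSdef, Set.image_image]
        have : (fun p : Fin n1 × Fin n2 => ((π1.symm (F p).1 : Fin n1), (π2.symm (F p).2 : Fin n2)))
            = fun p => p := by
          funext p
          simp [hF]
        rw [this, Set.image_id']
      · -- no generic pair : T is contained in a single row or column
        push_neg at hgen
        have htwo : 1 < T.ncard := by omega
        rw [Set.one_lt_ncard (Set.toFinite T)] at htwo
        obtain ⟨t1, ht1, t2, ht2, hne⟩ := htwo
        rcases Classical.em (t1.1 = t2.1) with hrr | hrr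
        · -- single row r = t1.1
          have hcc : t1.2 ≠ t2.2 := by
            intro h
            exact hne (Prod.ext hrr h)
          have hrow : ∀ t ∈ T, t.1 = t1.1 := by
            intro t ht
            by_contra hcon
            have e1 : t.2 = t1.2 := hgen t ht t1 ht1 hcon
            have e2 : t.2 = t2.2 := hgen t ht t2 ht2 (by rw [← hrr]; exact hcon)
            exact hcc (e1 ▸ e2)
          set C : Set (Fin n2) := Prod.snd '' T with hCdef
          have hc0 : t1.2 ∈ C := ⟨t1, ht1, rfl⟩
          have hc1 : t2.2 ∈ C := ⟨t2, ht2, rfl⟩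
          obtain ⟨τ, hτ1, hτ2⟩ := exists_perm hcc (fin_zero_ne_max hn2 p2)
          set m1 : Fin n1 := ⟨n1 - 1, Nat.sub_lt p1 Nat.one_pos⟩ with hm1
          set S := insert (zz p1 p2) ((fun c : Fin n2 => (m1, τ c)) '' (C \ {t1.2})) with hSdef
          have hzS : zz p1 p2 ∈ S := Set.mem_insert _ _
          have hmS : mm p1 p2 ∈ S := by
            refine Set.mem_insert_iff.mpr
              (Or.inr ⟨t2.2, ⟨hc1, fun h => hcc (Set.mem_singleton_iff.mp h).symm⟩, ?_⟩)
            show (m1, τ t2.2) = mm p1 p2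
            rw [hτ2]
            rfl
          have hCcard : C.ncard = k := by
            rw [hCdef, Set.ncard_image_of_injOn, hk]
            intro x hx y hy h
            exact Prod.ext (by rw [hrow x hx, hrow y hy]) h
          have hinj2 : Function.Injective (fun c : Fin n2 => (m1, τ c)) := by
            intro x y h
            rw [Prod.mk.injEq] at h
            exact τ.injective h.2
          have hznotmem : zz p1 p2 ∉ (fun c : Fin n2 => (m1, τ c)) '' (C \ {t1.2}) := by
            rintro ⟨c, -, heq⟩
            have := congrArg (fun q : Fin n1 × Fin n2 => (q.1 : Fin n1).val) heq
            simp only [hm1, zz] at this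
            omega
          have hScard : S.ncard = k := by
            have h5 : (C \ {t1.2}).ncard = k - 1 := by
              rw [Set.ncard_diff_singleton_of_mem hc0, hCcard]
            rw [hSdef, Set.ncard_insert_of_notMem hznotmem,
              Set.ncard_image_of_injective _ hinj2, h5]
            omega
          have hSreach : Reach p1 p2 S := by
            apply reach_insert_zz hn1 p1 p2 hzS hmS
            apply IH (k - 1) (by omega)
            · rw [Set.ncard_image_of_injective _ (ds_inj p1 p2),
                Set.ncard_diff_singleton_of_mem hzS, hScard]
            · rw [mem_ds_image]
              intro h
              exact absurd rfl h.2
          have hSne : S ≠ ∅ := Set.nonempty_iff_ne_empty.mp ⟨_, hzS⟩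
          set g : Fin n2 → Fin n2 := fun x => if x = (⟨0, p2⟩ : Fin n2) then t1.2 else τ.symm x with hgdef
          have hg : ∀ c : Fin n2, c ≠ t1.2 → g (τ c) = c := by
            intro c hc
            have hτc : τ c ≠ (⟨0, p2⟩ : Fin n2) := fun h => hc (τ.injective (h.trans hτ1.symm))
            rw [hgdef]
            simp only [if_neg hτc, Equiv.symm_apply_apply]
          have hg0 : g (⟨0, p2⟩ : Fin n2) = t1.2 := if_pos rfl
          refine reach_of_image p1 p2 hSreach hSne (fun _ => t1.1) g ?_ hm
          ext q
          constructor
          · rintro ⟨s, hs, rfl⟩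
            rcases Set.mem_insert_iff.mp hs with rfl | ⟨c, ⟨hcC, hcne⟩, rfl⟩
            · show (t1.1, g (⟨0, p2⟩ : Fin n2)) ∈ T
              rw [hg0]
              exact (Prod.mk.eta (p := t1)) ▸ ht1
            · have hcne' : c ≠ t1.2 := fun h => hcne (by rw [h]; exact Set.mem_singleton _)
              show (t1.1, g (τ c)) ∈ T
              rw [hg c hcne']
              obtain ⟨u, hu, rfl⟩ := hcC
              exact (Prod.ext (hrow u hu).symm rfl : (t1.1, u.2) = u) ▸ hu
          · intro hq
            rcases Classical.em (q.2 = t1.2) with hq2 | hq2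
            · refine ⟨zz p1 p2, Set.mem_insert _ _, ?_⟩
              show (t1.1, g (⟨0, p2⟩ : Fin n2)) = q
              rw [hg0]
              exact Prod.ext (hrow q hq).symm hq2.symm
            · refine ⟨(m1, τ q.2), Set.mem_insert_iff.mpr
                (Or.inr ⟨q.2, ⟨⟨q, hq, rfl⟩, fun h => hq2 h⟩, rfl⟩), ?_⟩
              show (t1.1, g (τ q.2)) = q
              rw [hg q.2 hq2]
              exact Prod.ext (hrow q hq).symm rfl
        · -- single column c = t1.2
          have hcc : t1.2 = t2.2 := hgen t1 ht1 t2 ht2 hrr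
          have hcol : ∀ t ∈ T, t.2 = t1.2 := by
            intro t ht
            by_contra hcon
            have e1 : t.1 = t1.1 := by
              by_contra h
              exact hcon (hgen t ht t1 ht1 h)
            have e2 : t.1 = t2.1 := by
              by_contra h
              exact hcon ((hgen t ht t2 ht2 h).trans hcc.symm)
            exact hrr (e1.symm.trans e2)
          set C : Set (Fin n1) := Prod.fst '' T with hCdef
          have hc0 : t1.1 ∈ C := ⟨t1, ht1, rfl⟩
          have hc1 : t2.1 ∈ C := ⟨t2, ht2, rfl⟩
          obtain ⟨τ, hτ1, hτ2⟩ := exists_perm hrr (fin_zero_ne_max hn1 p1)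
          set m2 : Fin n2 := ⟨n2 - 1, Nat.sub_lt p2 Nat.one_pos⟩ with hm2
          set S := insert (zz p1 p2) ((fun c : Fin n1 => (τ c, m2)) '' (C \ {t1.1})) with hSdef
          have hzS : zz p1 p2 ∈ S := Set.mem_insert _ _
          have hmS : mm p1 p2 ∈ S := by
            refine Set.mem_insert_iff.mpr
              (Or.inr ⟨t2.1, ⟨hc1, fun h => hrr (Set.mem_singleton_iff.mp h).symm⟩, ?_⟩)
            show (τ t2.1, m2) = mm p1 p2
            rw [hτ2]
            rfl
          have hCcard : C.ncard = k := by
            rw [hCdef, Set.ncard_image_of_injOn, hk]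
            intro x hx y hy h
            exact Prod.ext h (by rw [hcol x hx, hcol y hy])
          have hinj2 : Function.Injective (fun c : Fin n1 => (τ c, m2)) := by
            intro x y h
            rw [Prod.mk.injEq] at h
            exact τ.injective h.1
          have hznotmem : zz p1 p2 ∉ (fun c : Fin n1 => (τ c, m2)) '' (C \ {t1.1}) := by
            rintro ⟨c, -, heq⟩
            have := congrArg (fun q : Fin n1 × Fin n2 => (q.2 : Fin n2).val) heq
            simp only [hm2, zz] at this
            omega
          have hScard : S.ncard = k := by
            have h5 : (C \ {t1.1}).ncard = k - 1 := by
              rw [Set.ncard_diff_singleton_of_mem hc0, hCcard]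
            rw [hSdef, Set.ncard_insert_of_notMem hznotmem,
              Set.ncard_image_of_injective _ hinj2, h5]
            omega
          have hSreach : Reach p1 p2 S := by
            apply reach_insert_zz hn1 p1 p2 hzS hmS
            apply IH (k - 1) (by omega)
            · rw [Set.ncard_image_of_injective _ (ds_inj p1 p2),
                Set.ncard_diff_singleton_of_mem hzS, hScard]
            · rw [mem_ds_image]
              intro h
              exact absurd rfl h.2
          have hSne : S ≠ ∅ := Set.nonempty_iff_ne_empty.mp ⟨_, hzS⟩
          set f : Fin n1 → Fin n1 := fun x => if x = (⟨0, p1⟩ : Fin n1) then t1.1 else τ.symm x with hfdef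
          have hf : ∀ c : Fin n1, c ≠ t1.1 → f (τ c) = c := by
            intro c hc
            have hτc : τ c ≠ (⟨0, p1⟩ : Fin n1) := fun h => hc (τ.injective (h.trans hτ1.symm))
            rw [hfdef]
            simp only [if_neg hτc, Equiv.symm_apply_apply]
          have hf0 : f (⟨0, p1⟩ : Fin n1) = t1.1 := if_pos rfl
          refine reach_of_image p1 p2 hSreach hSne f (fun _ => t1.2) ?_ hm
          ext q
          constructor
          · rintro ⟨s, hs, rfl⟩
            rcases Set.mem_insert_iff.mp hs with rfl | ⟨c, ⟨hcC, hcne⟩, rfl⟩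
            · show (f (⟨0, p1⟩ : Fin n1), t1.2) ∈ T
              rw [hf0]
              exact (Prod.mk.eta (p := t1)) ▸ ht1
            · have hcne' : c ≠ t1.1 := fun h => hcne (by rw [h]; exact Set.mem_singleton _)
              show (f (τ c), t1.2) ∈ T
              rw [hf c hcne']
              obtain ⟨u, hu, rfl⟩ := hcC
              exact (Prod.ext rfl (hcol u hu).symm : (u.1, t1.2) = u) ▸ hu
          · intro hq
            rcases Classical.em (q.1 = t1.1) with hq1 | hq1
            · refine ⟨zz p1 p2, Set.mem_insert _ _, ?_⟩
              show (f (⟨0, p1⟩ : Fin n1), t1.2) = q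
              rw [hf0]
              exact Prod.ext hq1.symm (hcol q hq).symm
            · refine ⟨(τ q.1, m2), Set.mem_insert_iff.mpr
                (Or.inr ⟨q.1, ⟨⟨q, hq, rfl⟩, fun h => hq1 h⟩, rfl⟩), ?_⟩
              show (f (τ q.1), t1.2) = q
              rw [hf q.1 hq1]
              exact Prod.ext rfl (hcol q hq).symm



end StarInterAux


/-- every state `T` with `(n1-1, n2-1) ∈ T → (0,0) ∈ T` is reachable
from the initial state `∅` of the DFA `M̂`. -/
theorem stmt2 (n1 n2 : ℕ) (h1 : 2 ≤ n1) (h2 : 2 ≤ n2)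
    (T : Set (Fin n1 × Fin n2))
    (hT : (((⟨n1 - 1, by omega⟩ : Fin n1), (⟨n2 - 1, by omega⟩ : Fin n2)) ∈ T) →
      (((⟨0, by omega⟩ : Fin n1), (⟨0, by omega⟩ : Fin n2)) ∈ T)) :
    ∃ w : List ((Fin n1 → Fin n1) × (Fin n2 → Fin n2)),
      w.foldl (starInterStep n1 n2 (by omega) (by omega)) ∅ = T := by
  exact StarInterAux.reach_all h1 h2 (by omega) (by omega) T.ncard T rfl hT
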